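/- For all real x with 0 ≤ x ≤ 1 and all real μ ≥ 1, (1+x)^μ ≥ 1 + (μ²/(μ+1))·x + (2^μ − μ²/(μ+1) − 1)·x^μ. -/

import Mathlib

open Real Set

lemma key_bern (μ t : ℝ) (hμ : 1 ≤ μ) (ht0 : 0 ≤ t) (ht1 : t ≤ 1) :
    1 + (μ * (μ - 1) / (μ + 1)) * t ≤ (1 + t) ^ (μ - 1) := by
  have hμ1 : (0:ℝ) < μ + 1 := by linarith
  rcases le_or_gt 2 μ with h2 | h2
  · have hB := one_add_mul_self_le_rpow_one_add (s := t) (by linarith) (p := μ - 1) (by linarith)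
    have hle : μ * (μ - 1) / (μ + 1) * t ≤ (μ - 1) * t := by
      apply mul_le_mul_of_nonneg_right _ ht0
      rw [div_le_iff₀ hμ1]
      nlinarith
    linarith
  · have hp0 : 0 ≤ μ - 1 := by linarith
    have hp1 : μ - 1 ≤ 1 := by linarith
    have hcon := Real.concaveOn_rpow hp0 hp1
    have hchord := hcon.2 (x := 1) (y := 2) (by norm_num : (1:ℝ) ∈ Set.Ici (0:ℝ))
      (by norm_num : (2:ℝ) ∈ Set.Ici (0:ℝ)) (by linarith : 0 ≤ 1 - t) ht0 (by ring)
    simp only [smul_eq_mul, Real.one_rpow] at hchord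
    have h12 : (1 - t) * 1 + t * 2 = 1 + t := by ring
    rw [h12] at hchord
    have hexp : 1 + (μ - 1) * Real.log 2 ≤ (2:ℝ) ^ (μ - 1) := by
      rw [Real.rpow_def_of_pos (by norm_num : (0:ℝ) < 2)]
      have := Real.add_one_le_exp (Real.log 2 * (μ - 1))
      linarith [this]
    have hlog : (0.6931471803 : ℝ) < Real.log 2 := Real.log_two_gt_d9
    have hcoef : μ * (μ - 1) / (μ + 1) ≤ (μ - 1) * Real.log 2 := by
      rw [div_le_iff₀ hμ1]
      have h1 : (0.6931471803 : ℝ) * (μ + 1) ≤ Real.log 2 * (μ + 1) := by nlinarith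
      nlinarith [mul_nonneg hp0 (by nlinarith : (0:ℝ) ≤ Real.log 2 * (μ + 1) - μ)]
    have h2p : (μ * (μ - 1) / (μ + 1)) * t ≤ ((2:ℝ) ^ (μ - 1) - 1) * t := by
      apply mul_le_mul_of_nonneg_right _ ht0
      linarith
    nlinarith [hchord, h2p]

theorem stmt_0 (x μ : ℝ) (hx0 : 0 ≤ x) (hx1 : x ≤ 1) (hμ : 1 ≤ μ) :
    (1 + x) ^ μ ≥ 1 + (μ ^ 2 / (μ + 1)) * x + (2 ^ μ - μ ^ 2 / (μ + 1) - 1) * x ^ μ := by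
  have hμ0 : (0:ℝ) < μ := by linarith
  have hμ1 : (0:ℝ) < μ + 1 := by linarith
  set a : ℝ := μ ^ 2 / (μ + 1) with ha
  rcases eq_or_lt_of_le hx0 with h0 | hx0'
  · rw [← h0]
    rw [Real.zero_rpow hμ0.ne']
    norm_num
  -- 0 < x
  set g : ℝ → ℝ := fun t => ((1+t)^μ - 1 - a*t) / t^μ with hg
  have hderiv : ∀ t : ℝ, 0 < t → HasDerivAt g
      (((μ*(1+t)^(μ-1) - a) * t^μ - ((1+t)^μ - 1 - a*t) * (μ*t^(μ-1))) / (t^μ)^2) t := by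
    intro t ht
    have h1 : HasDerivAt (fun s : ℝ => (1+s)^μ) (μ*(1+t)^(μ-1)) t := by
      have := (Real.hasDerivAt_rpow_const (x := 1+t) (p := μ)
        (Or.inl (by positivity))).comp t ((hasDerivAt_id t).const_add 1)
      simpa [Function.comp_def] using this
    have h2 : HasDerivAt (fun s : ℝ => (1+s)^μ - 1 - a*s) (μ*(1+t)^(μ-1) - a) t := by
      have := (h1.sub_const 1).sub ((hasDerivAt_id t).const_mul a)
      simpa [Pi.sub_def] using this
    have h3 : HasDerivAt (fun s : ℝ => s^μ) (μ*t^(μ-1)) t :=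
      Real.hasDerivAt_rpow_const (Or.inl ht.ne')
    exact h2.div h3 (Real.rpow_pos_of_pos ht μ).ne'
  have hanti : AntitoneOn g (Icc x 1) := by
    apply antitoneOn_of_deriv_nonpos (convex_Icc x 1)
    · apply ContinuousOn.div
      · apply ContinuousOn.sub
        apply ContinuousOn.sub
        · exact (continuous_const.add continuous_id).continuousOn.rpow_const
            (fun t _ => Or.inr hμ0.le)
        · exact continuousOn_const
        · exact (continuous_const.mul continuous_id).continuousOn
      · exact continuousOn_id.rpow_const (fun t _ => Or.inr hμ0.le)
      · intro t ht
        exact (Real.rpow_pos_of_pos (lt_of_lt_of_le hx0' ht.1) μ).ne'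
    · intro t ht
      rw [interior_Icc] at ht
      exact (hderiv t (hx0'.trans ht.1)).differentiableAt.differentiableWithinAt
    · intro t ht
      rw [interior_Icc] at ht
      have ht0 : 0 < t := hx0'.trans ht.1
      rw [(hderiv t ht0).deriv]
      apply div_nonpos_of_nonpos_of_nonneg _ (sq_nonneg _)
      have hA : t^μ = t^(μ-1) * t := by
        rw [← Real.rpow_add_one ht0.ne' (μ-1)]; ring_nf
      have hB : (1+t)^μ = (1+t)^(μ-1) * (1+t) := by
        rw [← Real.rpow_add_one (by positivity : (1:ℝ)+t ≠ 0) (μ-1)]; ring_nf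
      have hkey := key_bern μ t hμ ht0.le ht.2.le
      have hbr : μ + a*(μ-1)*t - μ*(1+t)^(μ-1) ≤ 0 := by
        have hmul := mul_le_mul_of_nonneg_left hkey hμ0.le
        have : a*(μ-1) = μ * (μ * (μ - 1) / (μ + 1)) := by
          rw [ha]; field_simp
        nlinarith [hmul]
      have hN : (μ*(1+t)^(μ-1) - a) * t^μ - ((1+t)^μ - 1 - a*t) * (μ*t^(μ-1))
          = t^(μ-1) * (μ + a*(μ-1)*t - μ*(1+t)^(μ-1)) := by
        rw [hA, hB]; ring
      rw [hN]
      exact mul_nonpos_of_nonneg_of_nonpos (Real.rpow_nonneg ht0.le _) hbr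
  have hx1' : x ∈ Icc x 1 := ⟨le_refl x, hx1⟩
  have h1' : (1:ℝ) ∈ Icc x 1 := ⟨hx1, le_refl 1⟩
  have hgx := hanti hx1' h1' hx1
  have hg1 : g 1 = 2^μ - 1 - a := by
    rw [hg]; simp [Real.one_rpow]; norm_num
  rw [hg1] at hgx
  have hxpow : (0:ℝ) < x^μ := Real.rpow_pos_of_pos hx0' μ
  rw [hg, le_div_iff₀ hxpow] at hgx
  nlinarith [hgx]
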